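/- Let T be a contraction on H and for λ ∈ ℂ set W_λ := {(x, λx) : x ∈ H} ⊆ H × H. Then for every λ with |λ| > 1 (so that λ − T is boundedly invertible), W_λ ∩ A_T^⊥s = {((λ − T)⁻¹f, λ(λ − T)⁻¹f) : f ∈ K⋆^⊥}. -/

import Mathlib

open scoped InnerProductSpace
open ContinuousLinearMap

/-- Let `T` be a contraction on `H`, `K = ker(Id − T*T)`,
`K⋆ = ker(Id − TT*)`, `A_T = {(x,Tx) : x ∈ K}`, and `W_λ = {(x, λx)}`. For
`|λ| > 1` (so that `λ − T` is boundedly invertible, its inverse being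
`Ring.inverse`), `W_λ ∩ A_T^⊥s = {((λ − T)⁻¹f, λ(λ − T)⁻¹f) : f ∈ K⋆^⊥}`,
where `A_T^⊥s` is the symplectic orthogonal of `A_T` with respect to the
standard symplectic form (inner products linear in the first variable). -/
theorem weyl_fiber_outside_disc
    {H : Type*} [NormedAddCommGroup H] [InnerProductSpace ℂ H] [CompleteSpace H]
    (T : H →L[ℂ] H) (hT : ‖T‖ ≤ 1)
    (K Ks : Submodule ℂ H)
    (hK : K = LinearMap.ker ((1 - adjoint T ∘L T : H →L[ℂ] H) : H →ₗ[ℂ] H))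
    (hKs : Ks = LinearMap.ker ((1 - T ∘L adjoint T : H →L[ℂ] H) : H →ₗ[ℂ] H))
    (ATs : Set (H × H))
    (hATs : ATs = {a : H × H | ∀ b ∈ {p : H × H | ∃ x ∈ K, p = (x, T x)},
      Complex.I * ⟪b.1, a.1⟫_ℂ - Complex.I * ⟪b.2, a.2⟫_ℂ = 0})
    (lam : ℂ) (hlam : 1 < ‖lam‖) :
    {p : H × H | ∃ x : H, p = (x, lam • x)} ∩ ATs
      = {p : H × H | ∃ f ∈ Ksᗮ,
          p = (Ring.inverse (lam • (1 : H →L[ℂ] H) - T) f,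
                lam • Ring.inverse (lam • (1 : H →L[ℂ] H) - T) f)} := by
  have hlam0 : lam ≠ 0 := by
    intro h
    rw [h] at hlam
    simp at hlam
    linarith
  set A : H →L[ℂ] H := lam • (1 : H →L[ℂ] H) - T with hAdef
  have hAunit : IsUnit A := by
    have hnorm : ‖lam⁻¹ • T‖ < 1 := by
      rw [norm_smul]
      have h1 : ‖lam⁻¹‖ = (‖lam‖)⁻¹ := by
        simp
      calc ‖lam⁻¹‖ * ‖T‖ ≤ ‖lam⁻¹‖ * 1 :=
            mul_le_mul_of_nonneg_left hT (norm_nonneg _)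
        _ = (‖lam‖)⁻¹ := by rw [mul_one, h1]
        _ < 1 := by
            rw [inv_lt_one_iff₀]
            right; exact hlam
    have h1 : IsUnit ((1 : H →L[ℂ] H) - lam⁻¹ • T) := (Units.oneSub _ hnorm).isUnit
    have h2 : A = lam • ((1 : H →L[ℂ] H) - lam⁻¹ • T) := by
      rw [smul_sub, smul_smul, mul_inv_cancel₀ hlam0, one_smul]
    rw [h2, Algebra.smul_def]
    exact (hlam0.isUnit.map (algebraMap ℂ (H →L[ℂ] H))).mul h1
  have hApply : ∀ x : H, A x = lam • x - T x := by
    intro x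
    simp [hAdef, sub_apply, smul_apply, one_apply]
  have hinv1 : ∀ x : H, Ring.inverse A (A x) = x := by
    intro x
    have h : (Ring.inverse A * A) x = (1 : H →L[ℂ] H) x := by
      rw [Ring.inverse_mul_cancel A hAunit]
    simpa [mul_apply] using h
  have hinv2 : ∀ f : H, A (Ring.inverse A f) = f := by
    intro f
    have h : (A * Ring.inverse A) f = (1 : H →L[ℂ] H) f := by
      rw [Ring.mul_inverse_cancel A hAunit]
    simpa [mul_apply] using h
  have hKfix : ∀ y ∈ K, adjoint T (T y) = y := by
    intro y hy
    rw [hK, LinearMap.mem_ker] at hy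
    have h : y - adjoint T (T y) = 0 := by
      simpa [ContinuousLinearMap.sub_apply, ContinuousLinearMap.coe_coe, comp_apply] using hy
    exact (sub_eq_zero.mp h).symm
  have hKsfix : ∀ y ∈ Ks, T (adjoint T y) = y := by
    intro y hy
    rw [hKs, LinearMap.mem_ker] at hy
    have h : y - T (adjoint T y) = 0 := by
      simpa [ContinuousLinearMap.sub_apply, ContinuousLinearMap.coe_coe, comp_apply] using hy
    exact (sub_eq_zero.mp h).symm
  have hTK : ∀ y ∈ K, T y ∈ Ks := by
    intro y hy
    rw [hKs, LinearMap.mem_ker]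
    have := hKfix y hy
    simp [ContinuousLinearMap.sub_apply, ContinuousLinearMap.coe_coe, comp_apply, this]
  have hTsKs : ∀ y ∈ Ks, adjoint T y ∈ K := by
    intro y hy
    rw [hK, LinearMap.mem_ker]
    have := hKsfix y hy
    simp [ContinuousLinearMap.sub_apply, ContinuousLinearMap.coe_coe, comp_apply, this]
  ext p
  simp only [Set.mem_inter_iff, Set.mem_setOf_eq, hATs]
  constructor
  · rintro ⟨⟨x, rfl⟩, hp⟩
    refine ⟨lam • x - T x, ?_, ?_⟩
    · rw [Submodule.mem_orthogonal]
      intro y hy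
      have h0 := hp (adjoint T y, T (adjoint T y)) ⟨adjoint T y, hTsKs y hy, rfl⟩
      rw [hKsfix y hy] at h0
      -- h0 : I*⟪T* y, x⟫ - I*⟪y, lam•x⟫ = 0
      have key : ⟪(adjoint T) y, x⟫_ℂ = ⟪y, lam • x⟫_ℂ :=
        mul_left_cancel₀ Complex.I_ne_zero (sub_eq_zero.mp h0)
      rw [inner_sub_right, ← adjoint_inner_left T x y, key, sub_self]
    · rw [← hApply x, hinv1 x]
  · rintro ⟨f, hf, rfl⟩
    refine ⟨⟨Ring.inverse A f, rfl⟩, ?_⟩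
    rintro b ⟨y, hy, rfl⟩
    set x := Ring.inverse A f with hx
    have hfx : lam • x - T x = f := by rw [← hApply, hinv2 f]
    have h0 : ⟪T y, f⟫_ℂ = 0 := (Submodule.mem_orthogonal Ks f).mp hf _ (hTK y hy)
    rw [← hfx, inner_sub_right, ← adjoint_inner_left T x (T y), hKfix y hy,
      sub_eq_zero] at h0
    -- h0 : ⟪T y, lam • x⟫ = ⟪y, x⟫
    rw [h0, sub_self]
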